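/- Given three pairwise disjoint 2-dimensional subspaces S_1, S_2, S_3 of F_q^4, there are exactly q+1 two-dimensional subspaces that intersect each of S_1, S_2, S_3 in a 1-dimensional subspace. -/

import Mathlib

open Submodule Module

/-- A transversal line of three 2-spaces `S₁, S₂, S₃`: a 2-space meeting each `Sᵢ`
in a 1-dimensional subspace. -/
def IsTransversal {F V : Type*} [Field F] [AddCommGroup V] [Module F V]
    (S₁ S₂ S₃ L : Submodule F V) : Prop :=
  finrank F L = 2 ∧ finrank F ↥(L ⊓ S₁) = 1 ∧ finrank F ↥(L ⊓ S₂) = 1 ∧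
    finrank F ↥(L ⊓ S₃) = 1

section Count

variable {F V : Type*} [Field F] [Fintype F] [AddCommGroup V] [Module F V]

/-- The number of 1-dimensional subspaces of a 2-dimensional space over `F_q` is `q + 1`. -/
lemma card_lines_aux [FiniteDimensional F V] (h2 : finrank F V = 2) :
    Nat.card {W : Submodule F V // finrank F ↥W = 1} = Fintype.card F + 1 := by
  classical
  haveI : Finite V := Module.finite_of_finite F
  letI : Fintype V := Fintype.ofFinite V
  haveI : Finite (Submodule F V) :=
    Finite.of_injective (fun W : Submodule F V => (W : Set V)) SetLike.coe_injective
  letI : Fintype (Submodule F V) := Fintype.ofFinite _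
  set q := Fintype.card F with hq
  -- the fibration of nonzero vectors over lines
  set f : {v : V // v ≠ 0} → {W : Submodule F V // finrank F ↥W = 1} :=
    fun v => ⟨span F {v.1}, finrank_span_singleton v.2⟩ with hf
  have key : ∀ W : {W : Submodule F V // finrank F ↥W = 1},
      Fintype.card {v : {v : V // v ≠ 0} // f v = W} = q - 1 := by
    intro W
    have e : {v : {v : V // v ≠ 0} // f v = W} ≃ {w : ↥W.1 // w ≠ 0} := by
      refine ⟨fun x => ⟨⟨x.1.1, ?_⟩, ?_⟩, fun w => ⟨⟨w.1.1, ?_⟩, ?_⟩, ?_, ?_⟩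
      · have : span F {x.1.1} = W.1 := congrArg Subtype.val x.2
        exact this ▸ mem_span_singleton_self _
      · intro h
        exact x.1.2 (by simpa using congrArg Subtype.val h)
      · intro h
        exact w.2 (Subtype.ext h)
      · refine Subtype.ext ?_
        refine Submodule.eq_of_le_of_finrank_le ?_ ?_
        · exact (span_singleton_le_iff_mem _ _).mpr w.1.2
        · rw [W.2, finrank_span_singleton]
          intro h
          exact w.2 (Subtype.ext h)
      · intro x; rfl
      · intro w; rfl
    rw [Fintype.card_congr e]
    have hcard : Fintype.card ↥W.1 = q := by
      rw [card_eq_pow_finrank (K := F) (V := ↥W.1), W.2, pow_one]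
    have : Fintype.card {w : ↥W.1 // w ≠ 0} =
        Fintype.card ↥W.1 - Fintype.card {w : ↥W.1 // w = 0} := by
      simpa using Fintype.card_subtype_compl (fun w : ↥W.1 => w = 0)
    rw [this, hcard, Fintype.card_subtype_eq (0 : ↥W.1)]
  have htot : Fintype.card {v : V // v ≠ 0} = q ^ 2 - 1 := by
    have : Fintype.card {v : V // v ≠ 0} =
        Fintype.card V - Fintype.card {v : V // v = 0} := by
      simpa using Fintype.card_subtype_compl (fun v : V => v = 0)
    rw [this, Fintype.card_subtype_eq (0 : V), card_eq_pow_finrank (K := F) (V := V), h2]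
  have hsig := Fintype.card_congr (Equiv.sigmaFiberEquiv f).symm
  rw [Fintype.card_sigma] at hsig
  simp only [key, Finset.sum_const, smul_eq_mul] at hsig
  rw [htot] at hsig
  -- `hsig : q^2 - 1 = card * (q - 1)`
  have h2q : 2 ≤ q := Fintype.one_lt_card
  have hfac : q ^ 2 - 1 = (q + 1) * (q - 1) := by
    obtain ⟨k, hk⟩ : ∃ k, q = k + 2 := ⟨q - 2, by omega⟩
    have hm : (k + 2) * (k + 2) = (k + 3) * (k + 1) + 1 := by ring
    rw [pow_two, hk]
    have e1 : k + 2 + 1 = k + 3 := by omega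
    have e2 : k + 2 - 1 = k + 1 := by omega
    rw [e1, e2]
    omega
  rw [hfac] at hsig
  have hcancel : Fintype.card {W : Submodule F V // finrank F ↥W = 1} = q + 1 := by
    have hpos : 0 < q - 1 := by omega
    exact Nat.eq_of_mul_eq_mul_right hpos hsig.symm
  rw [Nat.card_eq_fintype_card, hcancel]

end Count

section Key

variable {F V : Type*} [Field F] [AddCommGroup V] [Module F V] [FiniteDimensional F V]

lemma key_bijective (hV : finrank F V = 4) (S₁ S₂ S₃ : Submodule F V)
    (h₁ : finrank F S₁ = 2) (h₂ : finrank F S₂ = 2) (h₃ : finrank F S₃ = 2)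
    (h12 : S₁ ⊓ S₂ = ⊥) (h13 : S₁ ⊓ S₃ = ⊥) (h23 : S₂ ⊓ S₃ = ⊥) :
    Function.Bijective (fun L : {L : Submodule F V // IsTransversal S₁ S₂ S₃ L} =>
      (⟨L.1 ⊓ S₃, inf_le_right, L.2.2.2.2⟩ :
        {W : Submodule F V // W ≤ S₃ ∧ finrank F ↥W = 1})) := by
  classical
  -- `S₁` and `S₂` are complementary
  have htop : S₁ ⊔ S₂ = ⊤ := by
    apply Submodule.eq_top_of_finrank_eq
    have h := Submodule.finrank_sup_add_finrank_inf_eq S₁ S₂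
    rw [h12, finrank_bot, h₁, h₂] at h
    omega
  have hc : IsCompl S₁ S₂ := ⟨disjoint_iff.mpr h12, codisjoint_iff.mpr htop⟩
  set π₁ : V →ₗ[F] V := S₁.subtype ∘ₗ S₁.projectionOnto S₂ hc with hπ₁def
  set π₂ : V →ₗ[F] V := S₂.subtype ∘ₗ S₂.projectionOnto S₁ hc.symm with hπ₂def
  have hmem₁ : ∀ x, π₁ x ∈ S₁ := fun x => (S₁.projectionOnto S₂ hc x).2
  have hmem₂ : ∀ x, π₂ x ∈ S₂ := fun x => (S₂.projectionOnto S₁ hc.symm x).2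
  have hadd : ∀ x, π₁ x + π₂ x = x := fun x =>
    Submodule.projection_add_projection_eq_self hc x
  have hπ₁left : ∀ x ∈ S₁, π₁ x = x := by
    intro x hx
    have := Submodule.projectionOnto_apply_left hc ⟨x, hx⟩
    exact congrArg Subtype.val this
  have hπ₁right : ∀ x ∈ S₂, π₁ x = 0 := by
    intro x hx
    have := Submodule.projectionOnto_apply_of_mem_right hc hx
    exact congrArg Subtype.val this
  have hπ₂left : ∀ x ∈ S₂, π₂ x = x := by
    intro x hx
    have := Submodule.projectionOnto_apply_left hc.symm ⟨x, hx⟩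
    exact congrArg Subtype.val this
  have hπ₂right : ∀ x ∈ S₁, π₂ x = 0 := by
    intro x hx
    have := Submodule.projectionOnto_apply_of_mem_right hc.symm hx
    exact congrArg Subtype.val this
  -- components of nonzero vectors of `S₃` are nonzero
  have hπ₁ne : ∀ z ∈ S₃, z ≠ 0 → π₁ z ≠ 0 := by
    intro z hz hz0 h0
    have : z ∈ S₂ := by
      have := hadd z
      rw [h0, zero_add] at this
      exact this ▸ hmem₂ z
    have : z ∈ S₂ ⊓ S₃ := ⟨this, hz⟩
    rw [h23, Submodule.mem_bot] at this
    exact hz0 this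
  have hπ₂ne : ∀ z ∈ S₃, z ≠ 0 → π₂ z ≠ 0 := by
    intro z hz hz0 h0
    have : z ∈ S₁ := by
      have := hadd z
      rw [h0, add_zero] at this
      exact this ▸ hmem₁ z
    have : z ∈ S₁ ⊓ S₃ := ⟨this, hz⟩
    rw [h13, Submodule.mem_bot] at this
    exact hz0 this
  -- dimension of the span of a pair with one vector in each of `S₁, S₂`
  have hpair : ∀ u w : V, u ∈ S₁ → w ∈ S₂ → u ≠ 0 → w ≠ 0 →
      finrank F ↥(span F {u, w}) = 2 := by
    intro u w hu hw hu0 hw0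
    have hsplit : span F ({u, w} : Set V) = span F {u} ⊔ span F {w} :=
      Submodule.span_insert u {w}
    have hinf : span F {u} ⊓ span F {w} = ⊥ := by
      rw [← le_bot_iff, ← h12]
      exact inf_le_inf ((span_singleton_le_iff_mem u S₁).mpr hu)
        ((span_singleton_le_iff_mem w S₂).mpr hw)
    have h := Submodule.finrank_sup_add_finrank_inf_eq (span F {u}) (span F {w})
    rw [hinf, finrank_bot, finrank_span_singleton hu0, finrank_span_singleton hw0] at h
    rw [hsplit]
    omega
  -- properties of the candidate transversal `span {π₁ z, π₂ z}`
  have hL₁ : ∀ z ∈ S₃, z ≠ 0 → span F {π₁ z, π₂ z} ⊓ S₁ = span F {π₁ z} := by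
    intro z hz hz0
    apply le_antisymm
    · rintro x ⟨hxL, hxS⟩
      obtain ⟨a, b, rfl⟩ := Submodule.mem_span_pair.mp hxL
      have hb : b • π₂ z ∈ S₁ ⊓ S₂ := by
        constructor
        · have : b • π₂ z = (a • π₁ z + b • π₂ z) - a • π₁ z := by abel
          rw [this]
          exact S₁.sub_mem hxS (S₁.smul_mem a (hmem₁ z))
        · exact S₂.smul_mem b (hmem₂ z)
      rw [h12, Submodule.mem_bot] at hb
      rw [hb, add_zero]
      exact Submodule.mem_span_singleton.mpr ⟨a, rfl⟩
    · rw [span_le, Set.singleton_subset_iff]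
      exact ⟨subset_span (by simp), hmem₁ z⟩
  have hL₂ : ∀ z ∈ S₃, z ≠ 0 → span F {π₁ z, π₂ z} ⊓ S₂ = span F {π₂ z} := by
    intro z hz hz0
    apply le_antisymm
    · rintro x ⟨hxL, hxS⟩
      obtain ⟨a, b, rfl⟩ := Submodule.mem_span_pair.mp hxL
      have ha : a • π₁ z ∈ S₁ ⊓ S₂ := by
        constructor
        · exact S₁.smul_mem a (hmem₁ z)
        · have : a • π₁ z = (a • π₁ z + b • π₂ z) - b • π₂ z := by abel
          rw [this]
          exact S₂.sub_mem hxS (S₂.smul_mem b (hmem₂ z))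
      rw [h12, Submodule.mem_bot] at ha
      rw [ha, zero_add]
      exact Submodule.mem_span_singleton.mpr ⟨b, rfl⟩
    · rw [span_le, Set.singleton_subset_iff]
      exact ⟨subset_span (by simp), hmem₂ z⟩
  have hL₃ : ∀ z ∈ S₃, z ≠ 0 → span F {π₁ z, π₂ z} ⊓ S₃ = span F {z} := by
    intro z hz hz0
    apply le_antisymm
    · rintro x ⟨hxL, hxS⟩
      obtain ⟨a, b, rfl⟩ := Submodule.mem_span_pair.mp hxL
      have hdiff : (a - b) • π₁ z ∈ S₁ ⊓ S₃ := by
        constructor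
        · exact S₁.smul_mem _ (hmem₁ z)
        · have hid : (a - b) • π₁ z = (a • π₁ z + b • π₂ z) - b • (π₁ z + π₂ z) := by
            module
          rw [hadd z] at hid
          rw [hid]
          exact S₃.sub_mem hxS (S₃.smul_mem b hz)
      rw [h13, Submodule.mem_bot] at hdiff
      have hab : a = b := by
        rcases smul_eq_zero.mp hdiff with h | h
        · exact sub_eq_zero.mp h
        · exact absurd h (hπ₁ne z hz hz0)
      refine Submodule.mem_span_singleton.mpr ⟨a, ?_⟩
      rw [hab, ← smul_add, hadd z]
    · rw [span_le, Set.singleton_subset_iff]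
      refine ⟨?_, hz⟩
      refine Submodule.mem_span_pair.mpr ⟨1, 1, ?_⟩
      rw [one_smul, one_smul, hadd z]
  have htrans : ∀ z ∈ S₃, z ≠ 0 → IsTransversal S₁ S₂ S₃ (span F {π₁ z, π₂ z}) := by
    intro z hz hz0
    refine ⟨hpair _ _ (hmem₁ z) (hmem₂ z) (hπ₁ne z hz hz0) (hπ₂ne z hz hz0), ?_, ?_, ?_⟩
    · rw [hL₁ z hz hz0]; exact finrank_span_singleton (hπ₁ne z hz hz0)
    · rw [hL₂ z hz hz0]; exact finrank_span_singleton (hπ₂ne z hz hz0)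
    · rw [hL₃ z hz hz0]; exact finrank_span_singleton hz0
  -- every transversal through `z` equals `span {π₁ z, π₂ z}`
  have hB : ∀ L : Submodule F V, IsTransversal S₁ S₂ S₃ L → ∀ z, z ∈ L ⊓ S₃ → z ≠ 0 →
      L = span F {π₁ z, π₂ z} := by
    intro L hL z hzmem hz0
    obtain ⟨hzL, hzS₃⟩ := hzmem
    obtain ⟨hL2, hLa, hLb, hLc⟩ := hL
    -- pick nonzero vectors in `L ⊓ S₁` and `L ⊓ S₂`
    have hne₁ : L ⊓ S₁ ≠ ⊥ := by
      intro h; rw [h, finrank_bot] at hLa; omega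
    have hne₂ : L ⊓ S₂ ≠ ⊥ := by
      intro h; rw [h, finrank_bot] at hLb; omega
    obtain ⟨u, humem, hu0⟩ := (Submodule.ne_bot_iff _).mp hne₁
    obtain ⟨w, hwmem, hw0⟩ := (Submodule.ne_bot_iff _).mp hne₂
    obtain ⟨huL, huS₁⟩ := humem
    obtain ⟨hwL, hwS₂⟩ := hwmem
    have hspan : span F {u, w} = L := by
      apply Submodule.eq_of_le_of_finrank_le
      · rw [span_le]
        rintro x hx
        rcases hx with h | h
        · exact h ▸ huL
        · rw [Set.mem_singleton_iff] at h
          exact h ▸ hwL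
      · rw [hL2, hpair u w huS₁ hwS₂ hu0 hw0]
    have hzspan : z ∈ span F ({u, w} : Set V) := hspan ▸ hzL
    obtain ⟨a, b, hab⟩ := Submodule.mem_span_pair.mp hzspan
    have hπ₁z : π₁ z = a • u := by
      rw [← hab]
      simp only [map_add, map_smul]
      rw [hπ₁left u huS₁, hπ₁right w hwS₂, smul_zero, add_zero]
    have hπ₂z : π₂ z = b • w := by
      rw [← hab]
      simp only [map_add, map_smul]
      rw [hπ₂right u huS₁, hπ₂left w hwS₂, smul_zero, zero_add]
    have ha0 : a ≠ 0 := by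
      intro h
      exact hπ₁ne z hzS₃ hz0 (by rw [hπ₁z, h, zero_smul])
    have hb0 : b ≠ 0 := by
      intro h
      exact hπ₂ne z hzS₃ hz0 (by rw [hπ₂z, h, zero_smul])
    rw [← hspan, hπ₁z, hπ₂z]
    rw [Submodule.span_insert u {w}, Submodule.span_insert (a • u) {b • w},
      Submodule.span_singleton_smul_eq (Ne.isUnit ha0) u,
      Submodule.span_singleton_smul_eq (Ne.isUnit hb0) w]
  constructor
  · rintro ⟨L, hL⟩ ⟨L', hL'⟩ heq
    have heq' : L ⊓ S₃ = L' ⊓ S₃ := congrArg Subtype.val heq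
    have hne : L ⊓ S₃ ≠ ⊥ := by
      intro h; have := hL.2.2.2; rw [h, finrank_bot] at this; omega
    obtain ⟨z, hzmem, hz0⟩ := (Submodule.ne_bot_iff _).mp hne
    have e1 := hB L hL z hzmem hz0
    have e2 := hB L' hL' z (heq' ▸ hzmem) hz0
    exact Subtype.ext (e1.trans e2.symm)
  · rintro ⟨W, hWle, hW1⟩
    have hne : W ≠ ⊥ := by
      intro h; rw [h, finrank_bot] at hW1; omega
    obtain ⟨z, hzW, hz0⟩ := (Submodule.ne_bot_iff _).mp hne
    have hzS₃ : z ∈ S₃ := hWle hzW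
    have hWspan : span F {z} = W := by
      apply Submodule.eq_of_le_of_finrank_le
      · rwa [span_singleton_le_iff_mem]
      · rw [hW1, finrank_span_singleton hz0]
    refine ⟨⟨span F {π₁ z, π₂ z}, htrans z hzS₃ hz0⟩, ?_⟩
    refine Subtype.ext ?_
    show span F {π₁ z, π₂ z} ⊓ S₃ = W
    rw [hL₃ z hzS₃ hz0, hWspan]

end Key

/-- Given three pairwise disjoint 2-dimensional subspaces of `F_q^4`, there are exactly
`q + 1` two-dimensional subspaces meeting each of them in a 1-dimensional subspace. -/
theorem stmt11 (F : Type*) [Field F] [Fintype F]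
    (S₁ S₂ S₃ : Submodule F (Fin 4 → F))
    (h₁ : finrank F S₁ = 2) (h₂ : finrank F S₂ = 2) (h₃ : finrank F S₃ = 2)
    (h12 : S₁ ⊓ S₂ = ⊥) (h13 : S₁ ⊓ S₃ = ⊥) (h23 : S₂ ⊓ S₃ = ⊥) :
    {L : Submodule F (Fin 4 → F) | IsTransversal S₁ S₂ S₃ L}.ncard =
      Fintype.card F + 1 := by
  classical
  have hV : finrank F (Fin 4 → F) = 4 := by
    simp [finrank_fintype_fun_eq_card]
  have hbij := key_bijective hV S₁ S₂ S₃ h₁ h₂ h₃ h12 h13 h23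
  -- the lines of `S₃`, viewed inside the ambient space
  have e₂ : {W : Submodule F (Fin 4 → F) // W ≤ S₃ ∧ finrank F ↥W = 1} ≃
      {U : Submodule F ↥S₃ // finrank F ↥U = 1} := by
    refine ⟨fun W => ⟨comap S₃.subtype W.1, ?_⟩,
      fun U => ⟨map S₃.subtype U.1, map_subtype_le _ _, ?_⟩, ?_, ?_⟩
    · have hmc : map S₃.subtype (comap S₃.subtype W.1) = W.1 := by
        rw [Submodule.map_comap_subtype]
        exact inf_eq_right.mpr W.2.1
      have := Submodule.finrank_map_subtype_eq S₃ (comap S₃.subtype W.1)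
      rw [hmc] at this
      rw [← this]
      exact W.2.2
    · rw [Submodule.finrank_map_subtype_eq]
      exact U.2
    · rintro ⟨W, hle, h1⟩
      refine Subtype.ext ?_
      show map S₃.subtype (comap S₃.subtype W) = W
      rw [Submodule.map_comap_subtype]
      exact inf_eq_right.mpr hle
    · rintro ⟨U, h1⟩
      refine Subtype.ext ?_
      exact Submodule.comap_map_eq_of_injective S₃.injective_subtype U
  rw [← Nat.card_coe_set_eq]
  have : Nat.card {L : Submodule F (Fin 4 → F) // IsTransversal S₁ S₂ S₃ L} =
      Nat.card {U : Submodule F ↥S₃ // finrank F ↥U = 1} :=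
    Nat.card_congr ((Equiv.ofBijective _ hbij).trans e₂)
  exact this.trans (card_lines_aux h₃)
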